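/- If L₁ and L₂ are regular languages over Σ, then their overlap assembly L₁ ⊙ L₂ = { z : ∃ x ∈ L₁, ∃ y ∈ L₂, z ∈ x ⊙ y } is regular. -/

import Mathlib

/-- Overlap assembly of two languages. -/
def langOA {α : Type*} (L₁ L₂ : Language α) : Language α :=
  {z | ∃ u v w : List α, v ≠ [] ∧ u ++ v ∈ L₁ ∧ v ++ w ∈ L₂ ∧ z = u ++ v ++ w}

section OA

variable {α : Type*} {σ₁ σ₂ : Type} (M₁ : DFA α σ₁) (M₂ : DFA α σ₂)

lemma snoc_inj {x y : List α} {a b : α} (h : x ++ [a] = y ++ [b]) : x = y ∧ a = b := by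
  obtain ⟨h1, h2⟩ := List.append_inj' h rfl
  exact ⟨h1, by simpa using h2⟩

/-- NFA recognizing the overlap assembly of the languages of two DFAs. -/
def oaNFA : NFA α (σ₁ ⊕ (σ₁ × σ₂) ⊕ σ₂) where
  step s a :=
    match s with
    | Sum.inl p => {t | t = Sum.inl (M₁.step p a) ∨
        t = Sum.inr (Sum.inl (M₁.step p a, M₂.step M₂.start a))}
    | Sum.inr (Sum.inl (p, q)) => {t | t = Sum.inr (Sum.inl (M₁.step p a, M₂.step q a)) ∨
        (p ∈ M₁.accept ∧ t = Sum.inr (Sum.inr (M₂.step q a)))}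
    | Sum.inr (Sum.inr q) => {Sum.inr (Sum.inr (M₂.step q a))}
  start := {Sum.inl M₁.start}
  accept := {s | (∃ p q, p ∈ M₁.accept ∧ q ∈ M₂.accept ∧ s = Sum.inr (Sum.inl (p, q))) ∨
    (∃ q, q ∈ M₂.accept ∧ s = Sum.inr (Sum.inr q))}

lemma oaNFA_inl (z : List α) (p : σ₁) :
    Sum.inl p ∈ (oaNFA M₁ M₂).eval z ↔ p = M₁.evalFrom M₁.start z := by
  induction z using List.reverseRecOn generalizing p with
  | nil => simp [oaNFA, NFA.eval, NFA.evalFrom, DFA.evalFrom]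
  | append_singleton x a ih =>
    rw [NFA.eval_append_singleton, NFA.mem_stepSet]
    constructor
    · rintro ⟨t, ht, hstep⟩
      rcases t with p' | ⟨⟨p', q'⟩ | q'⟩ <;>
        simp only [oaNFA, Set.mem_setOf_eq, Set.mem_singleton_iff, Sum.inl.injEq,
          Sum.inr.injEq, Prod.mk.injEq, false_or, or_false, reduceCtorEq,
          false_and, and_false] at hstep
      subst hstep
      rw [(ih p').mp ht, DFA.evalFrom_append_singleton]
    · rintro rfl
      refine ⟨Sum.inl (M₁.evalFrom M₁.start x), (ih _).mpr rfl, ?_⟩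
      simp [oaNFA, DFA.evalFrom_append_singleton]

lemma oaNFA_mid (z : List α) (p : σ₁) (q : σ₂) :
    Sum.inr (Sum.inl (p, q)) ∈ (oaNFA M₁ M₂).eval z ↔
      ∃ u v : List α, v ≠ [] ∧ z = u ++ v ∧ p = M₁.evalFrom M₁.start (u ++ v) ∧
        q = M₂.evalFrom M₂.start v := by
  induction z using List.reverseRecOn generalizing p q with
  | nil =>
    simp only [oaNFA, NFA.eval, NFA.evalFrom, List.foldl_nil, Set.mem_singleton_iff]
    constructor
    · rintro h; cases h
    · rintro ⟨u, v, hv, huv, _⟩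
      exact absurd (List.append_eq_nil_iff.mp huv.symm).2 hv
  | append_singleton x a ih =>
    rw [NFA.eval_append_singleton, NFA.mem_stepSet]
    constructor
    · rintro ⟨t, ht, hstep⟩
      rcases t with p' | ⟨⟨p', q'⟩ | q'⟩ <;>
        simp only [oaNFA, Set.mem_setOf_eq, Set.mem_singleton_iff, Sum.inl.injEq,
          Sum.inr.injEq, Prod.mk.injEq, false_or, or_false, reduceCtorEq,
          false_and, and_false] at hstep
      · obtain ⟨rfl, rfl⟩ := hstep
        refine ⟨x, [a], by simp, rfl, ?_, rfl⟩
        rw [(oaNFA_inl M₁ M₂ x p').mp ht, DFA.evalFrom_append_singleton]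
      · obtain ⟨rfl, rfl⟩ := hstep
        obtain ⟨u, v, hv, rfl, rfl, rfl⟩ := (ih p' q').mp ht
        refine ⟨u, v ++ [a], by simp, by simp, ?_, ?_⟩
        · rw [← List.append_assoc, DFA.evalFrom_append_singleton]
        · rw [DFA.evalFrom_append_singleton]
    · rintro ⟨u, v, hv, hz, hp, hq⟩
      rcases List.eq_nil_or_concat v with rfl | ⟨v', b, rfl⟩
      · exact absurd rfl hv
      · have hxa : x ++ [a] = (u ++ v') ++ [b] := by simpa using hz
        obtain ⟨hx, hab⟩ := snoc_inj hxa
        subst hab; subst hx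
        simp only [List.concat_eq_append] at hp hq hv
        rcases List.eq_nil_or_concat v' with rfl | hne
        · simp only [List.nil_append] at hp hq
          refine ⟨Sum.inl (M₁.evalFrom M₁.start (u ++ [])),
            (oaNFA_inl M₁ M₂ (u ++ []) _).mpr rfl, ?_⟩
          simp only [oaNFA, Set.mem_setOf_eq]
          right
          rw [hp, hq, List.append_nil, DFA.evalFrom_append_singleton]
          rfl
        · have hv' : v' ≠ [] := by rcases hne with ⟨l, c, rfl⟩; simp
          refine ⟨Sum.inr (Sum.inl (M₁.evalFrom M₁.start (u ++ v'),
            M₂.evalFrom M₂.start v')), (ih _ _).mpr ⟨u, v', hv', rfl, rfl, rfl⟩, ?_⟩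
          simp only [oaNFA, Set.mem_setOf_eq]
          left
          rw [hp, hq, ← List.append_assoc, DFA.evalFrom_append_singleton,
            DFA.evalFrom_append_singleton]

lemma oaNFA_inr (z : List α) (q : σ₂) :
    Sum.inr (Sum.inr q) ∈ (oaNFA M₁ M₂).eval z ↔
      ∃ u v w : List α, v ≠ [] ∧ w ≠ [] ∧ z = u ++ v ++ w ∧
        M₁.evalFrom M₁.start (u ++ v) ∈ M₁.accept ∧
        q = M₂.evalFrom M₂.start (v ++ w) := by
  induction z using List.reverseRecOn generalizing q with
  | nil =>
    simp only [oaNFA, NFA.eval, NFA.evalFrom, List.foldl_nil, Set.mem_singleton_iff]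
    constructor
    · rintro h; cases h
    · rintro ⟨u, v, w, hv, hw, huv, _⟩
      exact absurd (List.append_eq_nil_iff.mp huv.symm).2 hw
  | append_singleton x a ih =>
    rw [NFA.eval_append_singleton, NFA.mem_stepSet]
    constructor
    · rintro ⟨t, ht, hstep⟩
      rcases t with p' | ⟨⟨p', q'⟩ | q'⟩ <;>
        simp only [oaNFA, Set.mem_setOf_eq, Set.mem_singleton_iff, Sum.inl.injEq,
          Sum.inr.injEq, Prod.mk.injEq, false_or, or_false, reduceCtorEq,
          false_and, and_false, or_self] at hstep
      · obtain ⟨hacc, rfl⟩ := hstep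
        obtain ⟨u, v, hv, rfl, rfl, rfl⟩ := (oaNFA_mid M₁ M₂ x p' q').mp ht
        exact ⟨u, v, [a], hv, by simp, rfl, hacc, by
          rw [DFA.evalFrom_append_singleton]⟩
      · subst hstep
        obtain ⟨u, v, w, hv, hw, rfl, hacc, rfl⟩ := (ih q').mp ht
        exact ⟨u, v, w ++ [a], hv, by simp, by rw [List.append_assoc], hacc, by
          rw [← List.append_assoc, DFA.evalFrom_append_singleton]⟩
    · rintro ⟨u, v, w, hv, hw, hz, hacc, hq⟩
      rcases List.eq_nil_or_concat w with rfl | ⟨w', b, rfl⟩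
      · exact absurd rfl hw
      · have hxa : x ++ [a] = (u ++ v ++ w') ++ [b] := by simpa using hz
        obtain ⟨hx, hab⟩ := snoc_inj hxa
        subst hab; subst hx
        simp only [List.concat_eq_append] at hq hw
        rcases List.eq_nil_or_concat w' with rfl | hne
        · simp only [List.nil_append] at hq
          refine ⟨Sum.inr (Sum.inl (M₁.evalFrom M₁.start (u ++ v),
            M₂.evalFrom M₂.start v)),
            (oaNFA_mid M₁ M₂ _ _ _).mpr ⟨u, v, hv, by simp, rfl, rfl⟩, ?_⟩
          simp only [oaNFA, Set.mem_setOf_eq]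
          exact Or.inr ⟨hacc, by rw [hq, DFA.evalFrom_append_singleton]⟩
        · have hw' : w' ≠ [] := by rcases hne with ⟨l, c, rfl⟩; simp
          refine ⟨Sum.inr (Sum.inr (M₂.evalFrom M₂.start (v ++ w'))),
            (ih _).mpr ⟨u, v, w', hv, hw', rfl, hacc, rfl⟩, ?_⟩
          simp only [oaNFA, Set.mem_singleton_iff]
          rw [hq, ← List.append_assoc, DFA.evalFrom_append_singleton]

lemma oaNFA_accepts :
    (oaNFA M₁ M₂).accepts = langOA M₁.accepts M₂.accepts := by
  ext z
  rw [NFA.mem_accepts]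
  constructor
  · rintro ⟨s, hs, hz⟩
    rcases hs with ⟨p, q, hp, hq, rfl⟩ | ⟨q, hq, rfl⟩
    · obtain ⟨u, v, hv, rfl, hpe, hqe⟩ := (oaNFA_mid M₁ M₂ _ p q).mp hz
      refine ⟨u, v, [], hv, ?_, ?_, by simp⟩
      · show M₁.evalFrom M₁.start (u ++ v) ∈ M₁.accept
        exact hpe ▸ hp
      · show M₂.evalFrom M₂.start (v ++ []) ∈ M₂.accept
        rw [List.append_nil]; exact hqe ▸ hq
    · obtain ⟨u, v, w, hv, hw, rfl, hacc, hqe⟩ := (oaNFA_inr M₁ M₂ _ q).mp hz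
      refine ⟨u, v, w, hv, hacc, ?_, rfl⟩
      show M₂.evalFrom M₂.start (v ++ w) ∈ M₂.accept
      exact hqe ▸ hq
  · rintro ⟨u, v, w, hv, h1, h2, rfl⟩
    rw [DFA.mem_accepts] at h1 h2
    rcases List.eq_nil_or_concat w with rfl | hne
    · refine ⟨Sum.inr (Sum.inl (M₁.evalFrom M₁.start (u ++ v),
        M₂.evalFrom M₂.start v)), ?_, ?_⟩
      · exact Or.inl ⟨_, _, h1, by simp only [List.append_nil] at h2; exact h2, rfl⟩
      · exact (oaNFA_mid M₁ M₂ _ _ _).mpr ⟨u, v, hv, by simp, rfl, rfl⟩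
    · have hw : w ≠ [] := by rcases hne with ⟨l, c, rfl⟩; simp
      refine ⟨Sum.inr (Sum.inr (M₂.evalFrom M₂.start (v ++ w))), ?_, ?_⟩
      · exact Or.inr ⟨_, h2, rfl⟩
      · exact (oaNFA_inr M₁ M₂ _ _).mpr ⟨u, v, w, hv, hw, rfl, h1, rfl⟩

end OA

theorem langOA_regular {α : Type*} (L₁ L₂ : Language α)
    (h₁ : L₁.IsRegular) (h₂ : L₂.IsRegular) : (langOA L₁ L₂).IsRegular := by
  obtain ⟨σ₁, _, M₁, rfl⟩ := h₁
  obtain ⟨σ₂, _, M₂, rfl⟩ := h₂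
  classical
  refine ⟨Set (σ₁ ⊕ (σ₁ × σ₂) ⊕ σ₂), inferInstance, (oaNFA M₁ M₂).toDFA, ?_⟩
  rw [NFA.toDFA_correct, oaNFA_accepts]
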